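/- Let p be a prime and let (A, m_1) and (B, m_2) be multisets in the prime field F_p = ℤ/pℤ. Define the sumset multiset (A+B, m_3) by m_3(c) = max{ m_1(a) + m_2(b) − 1 : a ∈ A, b ∈ B, a + b = c } for c ∈ A + B. Then d(A+B) ≥ min{ p, d(A) + d(B) − 1 }. -/

import Mathlib

open Finset Pointwise

private lemma layer_sum {α : Type*} [DecidableEq α] (A : Finset α) (m : α → ℕ) :
    ∑ a ∈ A, m a = ∑ i ∈ Finset.range (A.sup m), (A.filter fun a => i < m a).card := by
  simp only [Finset.card_filter]
  rw [Finset.sum_comm]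
  refine Finset.sum_congr rfl fun a ha => ?_
  have h : m a ≤ A.sup m := Finset.le_sup ha
  rw [← Finset.sum_filter]
  have : (Finset.range (A.sup m)).filter (fun i => i < m a) = Finset.range (m a) := by
    ext i; simp only [Finset.mem_filter, Finset.mem_range]; omega
  simp [this]

theorem stmt_16 (p : ℕ) (hp : p.Prime)
    (A B : Finset (ZMod p)) (hA : A.Nonempty) (hB : B.Nonempty)
    (m₁ m₂ : ZMod p → ℕ) (hm₁ : ∀ a ∈ A, 1 ≤ m₁ a) (hm₂ : ∀ b ∈ B, 1 ≤ m₂ b)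
    (m₃ : ZMod p → ℕ)
    (hm₃ : ∀ c ∈ A + B, m₃ c =
      ((A ×ˢ B).filter fun ab => ab.1 + ab.2 = c).sup fun ab => m₁ ab.1 + m₂ ab.2 - 1) :
    min p (∑ a ∈ A, m₁ a + ∑ b ∈ B, m₂ b - 1) ≤ ∑ c ∈ A + B, m₃ c := by
  classical
  set s := A.sup m₁ with hsdef
  set t := B.sup m₂ with htdef
  obtain ⟨a₀, ha₀, ha₀s⟩ := Finset.exists_mem_eq_sup A hA m₁
  obtain ⟨b₀, hb₀, hb₀t⟩ := Finset.exists_mem_eq_sup B hB m₂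
  have hs1 : 1 ≤ s := by rw [hsdef, ha₀s]; exact hm₁ a₀ ha₀
  have ht1 : 1 ≤ t := by rw [htdef, hb₀t]; exact hm₂ b₀ hb₀
  set Aℓ : ℕ → Finset (ZMod p) := fun i => A.filter fun a => i < m₁ a with hAℓ
  set Bℓ : ℕ → Finset (ZMod p) := fun j => B.filter fun b => j < m₂ b with hBℓ
  set I : ℕ → ℕ := fun k => min k (s - 1) with hI
  set J : ℕ → ℕ := fun k => k - min k (s - 1) with hJ
  have hIJ : ∀ k, I k + J k = k := fun k => by simp only [hI, hJ]; omega
  have hIlt : ∀ k, I k < s := fun k => by simp only [hI]; omega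
  have hJlt : ∀ k ∈ Finset.range (s + t - 1), J k < t := fun k hk => by
    simp only [Finset.mem_range] at hk; simp only [hJ]; omega
  have hAne : ∀ i < s, (Aℓ i).Nonempty := fun i hi =>
    ⟨a₀, Finset.mem_filter.2 ⟨ha₀, by omega⟩⟩
  have hBne : ∀ j < t, (Bℓ j).Nonempty := fun j hj =>
    ⟨b₀, Finset.mem_filter.2 ⟨hb₀, by omega⟩⟩
  have hAsub : ∀ i, Aℓ i ⊆ A := fun i => Finset.filter_subset _ _
  have hBsub : ∀ j, Bℓ j ⊆ B := fun j => Finset.filter_subset _ _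
  set C : ℕ → Finset (ZMod p) := fun k => Aℓ (I k) + Bℓ (J k) with hC
  have hCsub : ∀ k, C k ⊆ A + B := fun k =>
    Finset.add_subset_add (hAsub _) (hBsub _)
  -- key 1 : for c ∈ A + B, number of k with c ∈ C k is at most m₃ c
  have key1 : ∀ c ∈ A + B,
      ((Finset.range (s + t - 1)).filter fun k => c ∈ C k).card ≤ m₃ c := by
    intro c hc
    calc ((Finset.range (s + t - 1)).filter fun k => c ∈ C k).card
        ≤ (Finset.range (m₃ c)).card := by
          apply Finset.card_le_card
          intro k hk
          simp only [Finset.mem_filter, Finset.mem_range] at hk ⊢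
          obtain ⟨hk1, hk2⟩ := hk
          rw [hC] at hk2
          rw [Finset.mem_add] at hk2
          obtain ⟨a, ha, b, hb, hab⟩ := hk2
          rw [hAℓ] at ha; rw [hBℓ] at hb
          simp only [Finset.mem_filter] at ha hb
          have hmem : (a, b) ∈ (A ×ˢ B).filter fun ab => ab.1 + ab.2 = c := by
            simp [Finset.mem_filter, Finset.mem_product, ha.1, hb.1, hab]
          have hle := Finset.le_sup (f := fun ab => m₁ ab.1 + m₂ ab.2 - 1) hmem
          rw [← hm₃ c hc] at hle
          have := hIJ k
          simp only at hle
          have ha2 := ha.2; have hb2 := hb.2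
          omega
      _ = m₃ c := Finset.card_range _
  -- key 2 : ∑ k, |C k| ≤ ∑ c, m₃ c
  have key2 : ∑ k ∈ Finset.range (s + t - 1), (C k).card ≤ ∑ c ∈ A + B, m₃ c := by
    have heq : ∀ k, (C k).card = ∑ c ∈ A + B, if c ∈ C k then 1 else 0 := by
      intro k
      rw [← Finset.sum_filter]
      have hfe : (A + B).filter (fun c => c ∈ C k) = C k := by
        ext c
        simp only [Finset.mem_filter, and_iff_right_iff_imp]
        exact fun hc => hCsub k hc
      rw [hfe, Finset.sum_const, smul_eq_mul, mul_one]
    calc ∑ k ∈ Finset.range (s + t - 1), (C k).card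
        = ∑ k ∈ Finset.range (s + t - 1), ∑ c ∈ A + B, if c ∈ C k then 1 else 0 :=
          Finset.sum_congr rfl fun k _ => heq k
      _ = ∑ c ∈ A + B, ∑ k ∈ Finset.range (s + t - 1), if c ∈ C k then 1 else 0 :=
          Finset.sum_comm
      _ ≤ ∑ c ∈ A + B, m₃ c := by
          refine Finset.sum_le_sum fun c hc => ?_
          rw [← Finset.sum_filter]
          simpa using key1 c hc
  -- Cauchy–Davenport per layer
  have hCD : ∀ k ∈ Finset.range (s + t - 1),
      min p ((Aℓ (I k)).card + (Bℓ (J k)).card - 1) ≤ (C k).card := fun k hk =>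
    ZMod.cauchy_davenport hp (hAne _ (hIlt k)) (hBne _ (hJlt k hk))
  -- layer decompositions of the sizes
  have hdA : ∑ a ∈ A, m₁ a = ∑ i ∈ Finset.range s, (Aℓ i).card := layer_sum A m₁
  have hdB : ∑ b ∈ B, m₂ b = ∑ j ∈ Finset.range t, (Bℓ j).card := layer_sum B m₂
  have hB0 : Bℓ 0 = B := by
    rw [hBℓ]; exact Finset.filter_true_of_mem fun b hb => hm₂ b hb
  have hAcard1 : ∀ i < s, 1 ≤ (Aℓ i).card := fun i hi => (hAne i hi).card_pos
  -- key 3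
  have key3 : ∑ a ∈ A, m₁ a + ∑ b ∈ B, m₂ b - 1 ≤
      ∑ k ∈ Finset.range (s + t - 1), ((Aℓ (I k)).card + (Bℓ (J k)).card - 1) := by
    have hsplit : Finset.range (s + t - 1) =
        Finset.range s ∪ Finset.Ico s (s + t - 1) := by
      rw [Finset.range_eq_Ico, Finset.range_eq_Ico, Finset.Ico_union_Ico_eq_Ico (by omega) (by omega)]
    rw [hsplit, Finset.sum_union (by
      rw [Finset.range_eq_Ico]
      exact Finset.Ico_disjoint_Ico_consecutive 0 s (s + t - 1))]
    have hBpos := hB.card_pos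
    have h1 : ∑ k ∈ Finset.range s, ((Aℓ (I k)).card + (Bℓ (J k)).card - 1) =
        ∑ k ∈ Finset.range s, ((Aℓ k).card + (B.card - 1)) := by
      refine Finset.sum_congr rfl fun k hk => ?_
      simp only [Finset.mem_range] at hk
      have hIk : I k = k := by simp only [hI]; omega
      have hJk : J k = 0 := by simp only [hJ]; omega
      rw [hIk, hJk, hB0]
      omega
    have h1' : ∑ k ∈ Finset.range s, ((Aℓ k).card + (B.card - 1)) =
        (∑ k ∈ Finset.range s, (Aℓ k).card) + s * (B.card - 1) := by
      rw [Finset.sum_add_distrib, Finset.sum_const, Finset.card_range, smul_eq_mul]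
    have h2 : ∑ k ∈ Finset.Ico s (s + t - 1), (Bℓ (k - s + 1)).card ≤
        ∑ k ∈ Finset.Ico s (s + t - 1), ((Aℓ (I k)).card + (Bℓ (J k)).card - 1) := by
      refine Finset.sum_le_sum fun k hk => ?_
      simp only [Finset.mem_Ico] at hk
      have hIk : I k = s - 1 := by simp only [hI]; omega
      have hJk : J k = k - s + 1 := by simp only [hJ]; omega
      rw [hIk, hJk]
      have := hAcard1 (s - 1) (by omega)
      omega
    have h3 : ∑ k ∈ Finset.Ico s (s + t - 1), (Bℓ (k - s + 1)).card =
        ∑ j ∈ Finset.Ico 1 t, (Bℓ j).card := by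
      apply Finset.sum_nbij' (fun k => k - s + 1) (fun j => j + s - 1) <;>
        intros <;> simp only [Finset.mem_Ico] at * <;>
        first | omega | (congr 1; omega)
    have h4 : ∑ j ∈ Finset.range t, (Bℓ j).card =
        B.card + ∑ j ∈ Finset.Ico 1 t, (Bℓ j).card := by
      rw [Finset.range_eq_Ico, Finset.sum_eq_sum_Ico_succ_bot (by omega), hB0]
    have hmul : B.card - 1 ≤ s * (B.card - 1) := Nat.le_mul_of_pos_left _ (by omega)
    omega
  -- combine
  have hmain : ∑ k ∈ Finset.range (s + t - 1),
      min p ((Aℓ (I k)).card + (Bℓ (J k)).card - 1) ≤ ∑ c ∈ A + B, m₃ c :=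
    le_trans (Finset.sum_le_sum hCD) key2
  by_cases hcap : ∀ k ∈ Finset.range (s + t - 1),
      (Aℓ (I k)).card + (Bℓ (J k)).card - 1 ≤ p
  · have heq : ∑ k ∈ Finset.range (s + t - 1),
        min p ((Aℓ (I k)).card + (Bℓ (J k)).card - 1) =
        ∑ k ∈ Finset.range (s + t - 1), ((Aℓ (I k)).card + (Bℓ (J k)).card - 1) :=
      Finset.sum_congr rfl fun k hk => min_eq_right (hcap k hk)
    calc min p (∑ a ∈ A, m₁ a + ∑ b ∈ B, m₂ b - 1)
        ≤ ∑ a ∈ A, m₁ a + ∑ b ∈ B, m₂ b - 1 := min_le_right _ _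
      _ ≤ ∑ k ∈ Finset.range (s + t - 1), ((Aℓ (I k)).card + (Bℓ (J k)).card - 1) := key3
      _ = _ := heq.symm
      _ ≤ ∑ c ∈ A + B, m₃ c := hmain
  · push_neg at hcap
    obtain ⟨k, hk, hkp⟩ := hcap
    have hsingle : min p ((Aℓ (I k)).card + (Bℓ (J k)).card - 1) = p :=
      min_eq_left (by omega)
    calc min p (∑ a ∈ A, m₁ a + ∑ b ∈ B, m₂ b - 1)
        ≤ p := min_le_left _ _
      _ ≤ ∑ k ∈ Finset.range (s + t - 1),
            min p ((Aℓ (I k)).card + (Bℓ (J k)).card - 1) := by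
          have h := Finset.single_le_sum
            (f := fun k => min p ((Aℓ (I k)).card + (Bℓ (J k)).card - 1))
            (fun _ _ => Nat.zero_le _) hk
          rw [hsingle] at h
          exact h
      _ ≤ ∑ c ∈ A + B, m₃ c := hmain
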